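/- Define g(p) = ∫_ℝ w̃_p(x)² dx for 1 < p < 3, where w̃_p(x) = (2√p/(e^{(p−1)x} + e^{(1−p)x}))^{1/(p−1)}. Then g(2) = 4 and g(p) = 4 + (6 − 12·ln 2)(p − 2) + o(p − 2) as p → 2. -/

import Mathlib

open Real MeasureTheory

noncomputable def wtilde (p : ℝ) (x : ℝ) : ℝ :=
  (2 * Real.sqrt p / (Real.exp ((p - 1) * x) + Real.exp ((1 - p) * x))) ^ (1 / (p - 1))

noncomputable def g (p : ℝ) : ℝ := ∫ x : ℝ, (wtilde p x) ^ 2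

open Set

lemma log_abs_le (b : ℝ) (hb : 0 < b) (hb1 : b ≤ 1) : |Real.log b| ≤ 4 * b ^ (-(4:ℝ)⁻¹) := by
  have hlb : Real.log b ≤ 0 := Real.log_nonpos hb.le hb1
  rw [abs_of_nonpos hlb]
  have hy : (0:ℝ) < b ^ ((4:ℝ)⁻¹) := Real.rpow_pos_of_pos hb _
  have h1 : Real.log (b ^ ((4:ℝ)⁻¹))⁻¹ ≤ (b ^ ((4:ℝ)⁻¹))⁻¹ - 1 :=
    Real.log_le_sub_one_of_pos (by positivity)
  rw [Real.log_inv, Real.log_rpow hb] at h1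
  have h2 : (b ^ ((4:ℝ)⁻¹))⁻¹ = b ^ (-(4:ℝ)⁻¹) := by rw [← Real.rpow_neg hb.le]
  nlinarith [Real.rpow_pos_of_pos hb (-(4:ℝ)⁻¹), h2 ▸ h1]

lemma split_rpow (u r : ℝ) (hu : u ∈ Ioo (-1:ℝ) 1) :
    (1 - u^2) ^ r = (1-u) ^ r * (1+u) ^ r := by
  obtain ⟨h1, h2⟩ := hu
  rw [show (1:ℝ) - u^2 = (1-u)*(1+u) by ring, Real.mul_rpow (by linarith) (by linarith)]

lemma prod_le_sum (u r : ℝ) (hu : u ∈ Ioo (-1:ℝ) 1) (hr : r ≤ 0) :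
    (1-u) ^ r * (1+u) ^ r ≤ (1-u) ^ r + (1+u) ^ r := by
  obtain ⟨h1, h2⟩ := hu
  have p1 : (0:ℝ) < 1 - u := by linarith
  have p2 : (0:ℝ) < 1 + u := by linarith
  rcases le_or_gt 0 u with h | h
  · have : (1+u) ^ r ≤ 1 := Real.rpow_le_one_of_one_le_of_nonpos (by linarith) hr
    nlinarith [Real.rpow_pos_of_pos p1 r, Real.rpow_pos_of_pos p2 r]
  · have : (1-u) ^ r ≤ 1 := Real.rpow_le_one_of_one_le_of_nonpos (by linarith) hr
    nlinarith [Real.rpow_pos_of_pos p1 r, Real.rpow_pos_of_pos p2 r]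

lemma integ_sum (r : ℝ) (hr : -1 < r) :
    IntegrableOn (fun u : ℝ => (1-u) ^ r + (1+u) ^ r) (Ioo (-1:ℝ) 1) volume := by
  have base : IntervalIntegrable (fun x : ℝ => x ^ r) volume 0 2 :=
    intervalIntegral.intervalIntegrable_rpow' hr
  have h1 : IntervalIntegrable (fun u : ℝ => (1-u) ^ r) volume (-1) 1 := by
    have := base.comp_sub_left 1
    norm_num at this
    exact this.symm
  have h2 : IntervalIntegrable (fun u : ℝ => (1+u) ^ r) volume (-1) 1 := by
    have := base.comp_add_left 1
    norm_num at this
    exact this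
  have := (h1.add h2)
  rw [intervalIntegrable_iff_integrableOn_Ioc_of_le (by norm_num)] at this
  exact this.mono_set Ioo_subset_Ioc_self

lemma sq_pos (u : ℝ) (hu : u ∈ Ioo (-1:ℝ) 1) : 0 < 1 - u^2 := by
  obtain ⟨h1, h2⟩ := hu; nlinarith

lemma sq_le_one (u : ℝ) : 1 - u^2 ≤ 1 := by nlinarith [sq_nonneg u]

lemma intable_log : IntegrableOn (fun u : ℝ => Real.log (1 - u^2)) (Ioo (-1:ℝ) 1) volume := by
  have hm : AEStronglyMeasurable (fun u : ℝ => Real.log (1 - u^2))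
      (volume.restrict (Ioo (-1:ℝ) 1)) := by
    apply Measurable.aestronglyMeasurable
    exact Real.measurable_log.comp (by measurability)
  apply Integrable.mono ((integ_sum (-(4:ℝ)⁻¹) (by norm_num)).const_mul 4) hm
  rw [ae_restrict_iff' measurableSet_Ioo]
  filter_upwards with u hu
  have hb := sq_pos u hu
  have hb1 := sq_le_one u
  have h1 : |Real.log (1-u^2)| ≤ 4 * (1-u^2) ^ (-(4:ℝ)⁻¹) := log_abs_le _ hb hb1
  have h2 : (1-u^2) ^ (-(4:ℝ)⁻¹) ≤ (1-u) ^ (-(4:ℝ)⁻¹) + (1+u) ^ (-(4:ℝ)⁻¹) := by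
    rw [split_rpow u _ hu]; exact prod_le_sum u _ hu (by norm_num)
  have h3 : (0:ℝ) ≤ (1-u) ^ (-(4:ℝ)⁻¹) + (1+u) ^ (-(4:ℝ)⁻¹) := by
    obtain ⟨ha, hb'⟩ := hu
    have q1 : (0:ℝ) < 1 - u := by linarith
    have q2 : (0:ℝ) < 1 + u := by linarith
    positivity
  rw [Real.norm_eq_abs, Real.norm_eq_abs]
  calc |Real.log (1-u^2)| ≤ 4 * (1-u^2) ^ (-(4:ℝ)⁻¹) := h1
    _ ≤ 4 * ((1-u) ^ (-(4:ℝ)⁻¹) + (1+u) ^ (-(4:ℝ)⁻¹)) := by linarith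
    _ ≤ |4 * ((1-u) ^ (-(4:ℝ)⁻¹) + (1+u) ^ (-(4:ℝ)⁻¹))| := le_abs_self _

lemma log_integral_value :
    ∫ u in Ioo (-1:ℝ) 1, Real.log (1 - u^2) = 4 * Real.log 2 - 4 := by
  have hab : (-1:ℝ) ≤ 1 := by norm_num
  set H : ℝ → ℝ := fun u => (1+u) * Real.log (1+u) - (1-u) * Real.log (1-u) - 2*u with hH
  have hcont : ContinuousOn H (Icc (-1:ℝ) 1) := by
    apply Continuous.continuousOn
    have c1 : Continuous fun u : ℝ => (1+u) * Real.log (1+u) :=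
      Real.continuous_mul_log.comp (by continuity)
    have c2 : Continuous fun u : ℝ => (1-u) * Real.log (1-u) :=
      Real.continuous_mul_log.comp (by continuity)
    exact (c1.sub c2).sub (by continuity)
  have hderiv : ∀ u ∈ Ioo (-1:ℝ) 1, HasDerivAt H (Real.log (1 - u^2)) u := by
    intro u hu
    obtain ⟨h1, h2⟩ := hu
    have p1 : (0:ℝ) < 1 + u := by linarith
    have p2 : (0:ℝ) < 1 - u := by linarith
    have d1 : HasDerivAt (fun u : ℝ => 1 + u) 1 u := by
      simpa using (hasDerivAt_id u).const_add 1
    have d2 : HasDerivAt (fun u : ℝ => 1 - u) (-1) u := by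
      simpa using (hasDerivAt_id u).const_sub 1
    have dl1 : HasDerivAt (fun u : ℝ => Real.log (1+u)) ((1+u)⁻¹) u := by
      have := (Real.hasDerivAt_log p1.ne').comp u d1
      simp only [mul_one] at this
      exact this
    have dl2 : HasDerivAt (fun u : ℝ => Real.log (1-u)) (-(1-u)⁻¹) u := by
      have := (Real.hasDerivAt_log p2.ne').comp u d2
      simp only [mul_neg, mul_one] at this
      exact this
    have dm1 := d1.mul dl1
    have dm2 := d2.mul dl2
    have := ((dm1.sub dm2).sub ((hasDerivAt_id u).const_mul 2))
    refine this.congr_deriv ?_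
    have : Real.log (1 - u^2) = Real.log (1+u) + Real.log (1-u) := by
      rw [← Real.log_mul p1.ne' p2.ne']; ring_nf
    rw [this]
    field_simp
    ring
  have hint : IntervalIntegrable (fun u : ℝ => Real.log (1 - u^2)) volume (-1) 1 := by
    rw [intervalIntegrable_iff_integrableOn_Ioc_of_le hab,
      integrableOn_Ioc_iff_integrableOn_Ioo]
    exact intable_log
  have := intervalIntegral.integral_eq_sub_of_hasDerivAt_of_le hab hcont hderiv hint
  rw [intervalIntegral.integral_of_le hab, integral_Ioc_eq_integral_Ioo] at this
  rw [this, hH]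
  norm_num [Real.log_zero]
  ring

noncomputable def J (t : ℝ) : ℝ := ∫ u in Ioo (-1:ℝ) 1, (1 - u^2) ^ (t - 1)

lemma J_one : J 1 = 2 := by
  have : ∀ u : ℝ, (1 - u^2) ^ ((1:ℝ) - 1) = 1 := by
    intro u; rw [sub_self, Real.rpow_zero]
  unfold J
  rw [MeasureTheory.setIntegral_congr_fun measurableSet_Ioo (fun u _ => this u)]
  simp [Real.volume_Ioo]
  norm_num

lemma J_deriv : HasDerivAt J (4 * Real.log 2 - 4) 1 := by
  have hmeas : ∀ t : ℝ, AEStronglyMeasurable (fun u : ℝ => (1 - u^2) ^ (t - 1))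
      (volume.restrict (Ioo (-1:ℝ) 1)) := by
    intro t
    apply ContinuousOn.aestronglyMeasurable _ measurableSet_Ioo
    intro u hu
    apply ContinuousAt.continuousWithinAt
    exact (continuousAt_const.sub (continuousAt_pow u 2)).rpow_const
      (Or.inl (sq_pos u hu).ne')
  have h := hasDerivAt_integral_of_dominated_loc_of_deriv_le
    (F := fun t u => (1 - u^2) ^ (t - 1))
    (F' := fun t (u:ℝ) => (1 - u^2) ^ (t - 1) * Real.log (1 - u^2))
    (x₀ := (1:ℝ))
    (bound := fun u => 4 * ((1-u) ^ (-(3/4):ℝ) + (1+u) ^ (-(3/4):ℝ)))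
    (μ := volume.restrict (Ioo (-1:ℝ) 1))
    (s := Metric.ball 1 2⁻¹) (Metric.ball_mem_nhds _ (by norm_num))
    (Filter.Eventually.of_forall hmeas)
    (by -- integrability of F 1
      have : ∀ u : ℝ, (1 - u^2) ^ ((1:ℝ) - 1) = 1 := by
        intro u; rw [sub_self, Real.rpow_zero]
      simp only [this]
      rw [integrable_const_iff]
      right
      rw [isFiniteMeasure_restrict]
      simp [Real.volume_Ioo]
      )
    (by -- measurability of F' 1
      apply ContinuousOn.aestronglyMeasurable _ measurableSet_Ioo
      intro u hu
      apply ContinuousAt.continuousWithinAt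
      have hc : ContinuousAt (fun u : ℝ => 1 - u^2) u := continuousAt_const.sub (continuousAt_pow u 2)
      have hlog : ContinuousAt (fun u : ℝ => Real.log (1 - u^2)) u :=
        ContinuousAt.comp (g := Real.log) (Real.continuousAt_log (sq_pos u hu).ne') hc
      exact (hc.rpow_const (Or.inl (sq_pos u hu).ne')).mul hlog)
    (by -- bound
      rw [ae_restrict_iff' measurableSet_Ioo]
      filter_upwards with u hu
      intro t ht
      have hb := sq_pos u hu
      have hb1 := sq_le_one u
      rw [Real.norm_eq_abs, abs_mul, abs_of_nonneg (Real.rpow_nonneg hb.le _)]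
      have h1 : (1 - u^2) ^ (t - 1) ≤ (1 - u^2) ^ (-(2:ℝ)⁻¹) := by
        apply Real.rpow_le_rpow_of_exponent_ge hb hb1
        have := Metric.mem_ball.mp ht
        rw [Real.dist_eq] at this
        have := abs_lt.mp this
        linarith [this.1]
      have h2 : |Real.log (1 - u^2)| ≤ 4 * (1-u^2) ^ (-(4:ℝ)⁻¹) := log_abs_le _ hb hb1
      calc (1 - u^2) ^ (t - 1) * |Real.log (1 - u^2)|
          ≤ (1 - u^2) ^ (-(2:ℝ)⁻¹) * (4 * (1-u^2) ^ (-(4:ℝ)⁻¹)) := by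
            apply mul_le_mul h1 h2 (abs_nonneg _) (Real.rpow_nonneg hb.le _)
        _ = 4 * ((1-u^2) ^ (-(2:ℝ)⁻¹) * (1-u^2) ^ (-(4:ℝ)⁻¹)) := by ring
        _ = 4 * (1-u^2) ^ (-(3/4):ℝ) := by
            rw [← Real.rpow_add hb]
            norm_num
        _ ≤ 4 * ((1-u) ^ (-(3/4):ℝ) + (1+u) ^ (-(3/4):ℝ)) := by
            rw [split_rpow u _ hu]
            have := prod_le_sum u (-(3/4):ℝ) hu (by norm_num)
            linarith)
    ((integ_sum (-(3/4):ℝ) (by norm_num)).const_mul 4)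
    (by -- differentiability
      rw [ae_restrict_iff' measurableSet_Ioo]
      filter_upwards with u hu
      intro t ht
      have hb := sq_pos u hu
      have hd : HasDerivAt (fun t : ℝ => t - 1) 1 t := (hasDerivAt_id t).sub_const 1
      have := (hasDerivAt_const t (1 - u^2)).rpow hd hb
      simpa using this)
  have h2 := h.2
  have : (∫ u in Ioo (-1:ℝ) 1, (1 - u^2) ^ ((1:ℝ) - 1) * Real.log (1 - u^2))
      = 4 * Real.log 2 - 4 := by
    have e : ∀ u : ℝ, (1 - u^2) ^ ((1:ℝ) - 1) * Real.log (1 - u^2) = Real.log (1 - u^2) := by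
      intro u; rw [sub_self, Real.rpow_zero, one_mul]
    simp only [e]
    exact log_integral_value
  rw [this] at h2
  exact h2

lemma exp_half_log (x : ℝ) (hx : 0 < x) : Real.exp (Real.log x / 2) = Real.sqrt x := by
  rw [← Real.log_sqrt hx.le, Real.exp_log (Real.sqrt_pos.mpr hx)]

lemma g_eq (p : ℝ) (hp : p ∈ Ioo (1:ℝ) 3) :
    g p = p ^ ((p-1)⁻¹) * ((p-1)⁻¹ * J ((p-1)⁻¹)) := by
  obtain ⟨hp1, hp3⟩ := hp
  have hc : (0:ℝ) < p - 1 := by linarith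
  have hp0 : (0:ℝ) < p := by linarith
  set c := p - 1 with hcdef
  set t := c⁻¹ with htdef
  set φ : ℝ → ℝ := fun u => (2*c)⁻¹ * (Real.log (1+u) - Real.log (1-u)) with hφ
  set φ' : ℝ → ℝ := fun u => (c * (1 - u^2))⁻¹ with hφ'
  have hderiv : ∀ u ∈ Ioo (-1:ℝ) 1, HasDerivAt φ (φ' u) u := by
    intro u hu
    obtain ⟨h1, h2⟩ := hu
    have p1 : (0:ℝ) < 1 + u := by linarith
    have p2 : (0:ℝ) < 1 - u := by linarith
    have d1 : HasDerivAt (fun u : ℝ => 1 + u) 1 u := by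
      simpa using (hasDerivAt_id u).const_add 1
    have d2 : HasDerivAt (fun u : ℝ => 1 - u) (-1) u := by
      simpa using (hasDerivAt_id u).const_sub 1
    have dl1 : HasDerivAt (fun u : ℝ => Real.log (1+u)) ((1+u)⁻¹) u := by
      have := (Real.hasDerivAt_log p1.ne').comp u d1
      simp only [mul_one] at this
      exact this
    have dl2 : HasDerivAt (fun u : ℝ => Real.log (1-u)) (-(1-u)⁻¹) u := by
      have := (Real.hasDerivAt_log p2.ne').comp u d2
      simp only [mul_neg, mul_one] at this
      exact this
    have := ((dl1.sub dl2).const_mul ((2*c)⁻¹))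
    refine this.congr_deriv ?_; symm
    show (c * (1 - u^2))⁻¹ = (2*c)⁻¹ * ((1+u)⁻¹ - -(1-u)⁻¹)
    have e : (1:ℝ) - u^2 = (1+u)*(1-u) := by ring
    rw [e]
    field_simp
    ring
  have hinj : InjOn φ (Ioo (-1:ℝ) 1) := by
    have hmono : StrictMonoOn φ (Ioo (-1:ℝ) 1) := by
      apply strictMonoOn_of_deriv_pos (convex_Ioo _ _)
      · intro u hu
        exact ((hderiv u hu).differentiableAt.continuousAt).continuousWithinAt
      · intro u hu
        rw [interior_Ioo] at hu
        rw [(hderiv u hu).deriv]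
        have := sq_pos u hu
        rw [hφ']
        positivity
    exact hmono.injOn
  have himg : φ '' Ioo (-1:ℝ) 1 = univ := by
    apply Set.eq_univ_of_forall
    intro x
    set v := Real.exp (2*c*x) with hv
    have hv0 : (0:ℝ) < v := Real.exp_pos _
    have hv1 : (0:ℝ) < v + 1 := by linarith
    refine ⟨(v-1)/(v+1), ?_, ?_⟩
    · constructor
      · rw [lt_div_iff₀ hv1]; linarith
      · rw [div_lt_one hv1]; linarith
    · have e1 : 1 + (v-1)/(v+1) = 2*v/(v+1) := by field_simp; ring
      have e2 : 1 - (v-1)/(v+1) = 2/(v+1) := by field_simp; ring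
      rw [hφ]
      simp only [e1, e2]
      rw [← Real.log_div (by positivity) (by positivity)]
      have e3 : 2*v/(v+1) / (2/(v+1)) = v := by field_simp
      rw [e3, hv, Real.log_exp]
      field_simp
  have key : ∀ u ∈ Ioo (-1:ℝ) 1,
      |φ' u| • (wtilde p (φ u))^2 = (p ^ t / c) * (1 - u^2) ^ (t - 1) := by
    intro u hu
    obtain ⟨h1, h2⟩ := hu
    have p1 : (0:ℝ) < 1 + u := by linarith
    have p2 : (0:ℝ) < 1 - u := by linarith
    have hb : (0:ℝ) < 1 - u^2 := by nlinarith
    have ha : (p - 1) * φ u = Real.log (1+u) / 2 - Real.log (1-u) / 2 := by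
      rw [hφ]; field_simp; ring
    have hexp : Real.exp ((p-1) * φ u) = Real.sqrt (1+u) / Real.sqrt (1-u) := by
      rw [ha, Real.exp_sub, exp_half_log _ p1, exp_half_log _ p2]
    have hexp' : Real.exp ((1-p) * φ u) = Real.sqrt (1-u) / Real.sqrt (1+u) := by
      have : (1-p) * φ u = -((p-1) * φ u) := by ring
      rw [this, Real.exp_neg, hexp]
      rw [inv_div]
    have s1 : (0:ℝ) < Real.sqrt (1+u) := Real.sqrt_pos.mpr p1
    have s2 : (0:ℝ) < Real.sqrt (1-u) := Real.sqrt_pos.mpr p2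
    have hsum : Real.exp ((p-1) * φ u) + Real.exp ((1-p) * φ u)
        = 2 / Real.sqrt (1 - u^2) := by
      rw [hexp, hexp']
      have e : (1:ℝ) - u^2 = (1+u)*(1-u) := by ring
      rw [e, Real.sqrt_mul p1.le]
      rw [div_add_div _ _ s2.ne' s1.ne']
      rw [Real.mul_self_sqrt p1.le, Real.mul_self_sqrt p2.le]
      rw [show (1+u) + (1-u) = (2:ℝ) by ring]
      rw [mul_comm (Real.sqrt (1-u)) (Real.sqrt (1+u))]
    have hbase : 2 * Real.sqrt p / (Real.exp ((p-1) * φ u) + Real.exp ((1-p) * φ u))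
        = Real.sqrt (p * (1 - u^2)) := by
      rw [hsum, Real.sqrt_mul hp0.le]
      have hs : (0:ℝ) < Real.sqrt (1 - u^2) := Real.sqrt_pos.mpr hb
      field_simp
    have hX : (0:ℝ) < p * (1 - u^2) := by positivity
    have hw : wtilde p (φ u) = (p * (1 - u^2)) ^ (2⁻¹ * t) := by
      rw [wtilde, hbase, Real.sqrt_eq_rpow, ← Real.rpow_mul hX.le]
      congr 1
      · simp only [htdef, hcdef]
        ring
    have hw2 : (wtilde p (φ u))^2 = p ^ t * (1 - u^2) ^ t := by
      rw [hw, ← Real.rpow_natCast ((p * (1 - u^2)) ^ (2⁻¹ * t)) 2, ← Real.rpow_mul hX.le,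
        show (2⁻¹ * t) * ((2:ℕ):ℝ) = t by push_cast; ring]
      exact Real.mul_rpow hp0.le hb.le
    have habs : |φ' u| = (c * (1 - u^2))⁻¹ := by
      rw [hφ', abs_of_pos (by positivity)]
    rw [habs, smul_eq_mul, hw2]
    rw [Real.rpow_sub hb, Real.rpow_one]
    field_simp
  calc g p = ∫ x in univ, (wtilde p x)^2 := by unfold g; exact setIntegral_univ.symm
    _ = ∫ x in φ '' Ioo (-1:ℝ) 1, (wtilde p x)^2 := by rw [himg]
    _ = ∫ u in Ioo (-1:ℝ) 1, |φ' u| • (wtilde p (φ u))^2 :=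
        integral_image_eq_integral_abs_deriv_smul measurableSet_Ioo
          (fun u hu => (hderiv u hu).hasDerivWithinAt) hinj _
    _ = ∫ u in Ioo (-1:ℝ) 1, (p ^ t / c) * (1 - u^2) ^ (t - 1) :=
        setIntegral_congr_fun measurableSet_Ioo key
    _ = (p ^ t / c) * J t := by rw [MeasureTheory.integral_const_mul]; rfl
    _ = p ^ t * (t * J t) := by rw [htdef]; field_simp

theorem stmt17 : g 2 = 4 ∧ HasDerivAt g (6 - 12 * Real.log 2) 2 := by
  have h2mem : (2:ℝ) ∈ Ioo (1:ℝ) 3 := by norm_num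
  have hg2 : g 2 = 4 := by
    rw [g_eq 2 h2mem]
    norm_num [J_one]
  refine ⟨hg2, ?_⟩
  -- derivative of auxiliary pieces at 2
  have h1 : HasDerivAt (fun p : ℝ => (p-1)⁻¹) (-1) 2 := by
    have := ((hasDerivAt_id (2:ℝ)).sub_const 1).inv (by norm_num)
    norm_num at this
    exact this
  have h2 : HasDerivAt (fun p : ℝ => J ((p-1)⁻¹)) (4 - 4 * Real.log 2) 2 := by
    have : ((2:ℝ)-1)⁻¹ = 1 := by norm_num
    have hc := HasDerivAt.comp (2:ℝ) (this ▸ J_deriv) h1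
    refine hc.congr_deriv ?_
    ring
  have h3 : HasDerivAt (fun p : ℝ => p ^ ((p-1)⁻¹)) (1 - 2 * Real.log 2) 2 := by
    have := (hasDerivAt_id (2:ℝ)).rpow h1 (by norm_num)
    refine this.congr_deriv ?_
    norm_num
    ring
  have hA : HasDerivAt (fun p : ℝ => p ^ ((p-1)⁻¹) * ((p-1)⁻¹ * J ((p-1)⁻¹)))
      (6 - 12 * Real.log 2) 2 := by
    have := h3.mul (h1.mul h2)
    norm_num [J_one] at this
    refine this.congr_deriv ?_
    ring
  apply hA.congr_of_eventuallyEq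
  have : Ioo (1:ℝ) 3 ∈ nhds (2:ℝ) := isOpen_Ioo.mem_nhds h2mem
  filter_upwards [this] with p hp
  exact g_eq p hp
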